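/- The dual braid monoid of type I_2(m) (presented by σ_1,...,σ_m with all products σ_{i+1}σ_i and σ_1σ_m equal) has exactly m + 2 simple elements, i.e. the common value Δ of these products has exactly m + 2 left divisors in the monoid: 1, σ_1, ..., σ_m, and Δ. -/

import Mathlib

/-- The defining relations of the dual braid monoid of type `I₂(m)`: all the cyclic products
`σ_{i+1} σ_i` (indices mod `m`) are equal. -/
def dualI2Rel (m : ℕ) [NeZero m] : FreeMonoid (Fin m) → FreeMonoid (Fin m) → Prop :=
  fun u v => ∃ i : Fin m, u = .of (i + 1) * .of i ∧ v = .of (i + 2) * .of (i + 1)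

namespace DualI2Aux

variable (m : ℕ) [NeZero m]

/-- The generators. -/
def gen (i : Fin m) : PresentedMonoid (dualI2Rel m) := PresentedMonoid.of _ i

/-- The Garside element. -/
def Δ : PresentedMonoid (dualI2Rel m) := gen m 1 * gen m 0

/-- The length homomorphism. -/
def len : PresentedMonoid (dualI2Rel m) →* Multiplicative ℕ :=
  PresentedMonoid.lift (fun _ => Multiplicative.ofAdd 1) (by
    rintro a b ⟨i, rfl, rfl⟩
    simp)

lemma len_mk (u : FreeMonoid (Fin m)) :
    len m (PresentedMonoid.mk _ u) = Multiplicative.ofAdd u.length := by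
  show FreeMonoid.lift _ u = _
  rw [FreeMonoid.lift_apply]
  have : ∀ l : List (Fin m),
      (l.map (fun _ => Multiplicative.ofAdd 1)).prod = Multiplicative.ofAdd l.length := by
    intro l
    induction l with
    | nil => rfl
    | cons a l ih =>
        simp only [List.map_cons, List.prod_cons, ih, List.length_cons]
        rw [← ofAdd_add]
        congr 1
        omega
  exact this u.toList

/-- A finite state machine distinguishing the generators. -/
def fsm (i : Fin m) : Function.End (Option (Option (Fin m))) :=
  fun x => match x with
  | none => some (some i)
  | some _ => some none

/-- The homomorphism to the state machine monoid. -/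
def ψ : PresentedMonoid (dualI2Rel m) →* Function.End (Option (Option (Fin m))) :=
  PresentedMonoid.lift (fsm m) (by
    rintro a b ⟨i, rfl, rfl⟩
    simp only [map_mul, FreeMonoid.lift_eval_of]
    funext x
    cases x <;> rfl)

lemma gen_injective : Function.Injective (gen m) := by
  intro i j h
  have := congrArg (ψ m) h
  have h2 : fsm m i = fsm m j := this
  have h3 := congrFun h2 none
  simpa [fsm] using h3

lemma step (i : Fin m) : gen m (i + 1) * gen m i = gen m (i + 2) * gen m (i + 1) := by
  show PresentedMonoid.mk _ (FreeMonoid.of (i+1) * FreeMonoid.of i) =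
    PresentedMonoid.mk _ (FreeMonoid.of (i+2) * FreeMonoid.of (i+1))
  exact Quotient.sound (ConGen.Rel.of _ _ ⟨i, rfl, rfl⟩)

open Fin.NatCast Fin.CommRing in
lemma key (k : ℕ) : gen m ((k : Fin m) + 1) * gen m (k : Fin m) = Δ m := by
  induction k with
  | zero => simp [Δ]
  | succ n ih =>
      have : ((n + 1 : ℕ) : Fin m) = (n : Fin m) + 1 := by push_cast; ring
      rw [this]
      have h2 := step m (n : Fin m)
      have : (n : Fin m) + 2 = (n : Fin m) + 1 + 1 := by ring
      rw [this] at h2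
      rw [← h2]
      exact ih

lemma prod_eq (i : Fin m) : gen m (i + 1) * gen m i = Δ m := by
  have := key m (i : ℕ)
  rwa [Fin.cast_val_eq_self] at this

/-- Length as a natural number. -/
def lenN (s : PresentedMonoid (dualI2Rel m)) : ℕ := ((len m) s).toAdd

lemma lenN_mul (a b : PresentedMonoid (dualI2Rel m)) :
    lenN m (a * b) = lenN m a + lenN m b := by
  unfold lenN; rw [map_mul]; rfl

lemma lenN_mk (u : FreeMonoid (Fin m)) : lenN m (PresentedMonoid.mk _ u) = u.length := by
  unfold lenN; rw [len_mk]; simp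

lemma lenN_one : lenN m 1 = 0 := by unfold lenN; rw [map_one]; rfl

lemma lenN_gen (i : Fin m) : lenN m (gen m i) = 1 := rfl

lemma lenN_Δ : lenN m (Δ m) = 2 := by
  show lenN m (gen m 1 * gen m 0) = _
  rw [lenN_mul, lenN_gen, lenN_gen]

lemma gen_ne_one (i : Fin m) : gen m i ≠ 1 := by
  intro h
  have := congrArg (lenN m) h
  rw [lenN_gen, lenN_one] at this
  omega

lemma Δ_ne_one : Δ m ≠ 1 := by
  intro h
  have := congrArg (lenN m) h
  rw [lenN_Δ, lenN_one] at this
  omega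

lemma Δ_ne_gen (i : Fin m) : Δ m ≠ gen m i := by
  intro h
  have := congrArg (lenN m) h
  rw [lenN_Δ, lenN_gen] at this
  omega

/-- The finset of simple elements. -/
noncomputable def simples : Finset (PresentedMonoid (dualI2Rel m)) := by
  classical
  exact insert (Δ m) (insert 1 (Finset.image (gen m) Finset.univ))

lemma divisors_eq :
    {s : PresentedMonoid (dualI2Rel m) | ∃ t, s * t = Δ m} = ↑(simples m) := by
  classical
  ext s
  simp only [Set.mem_setOf_eq, simples, Finset.coe_insert, Set.mem_insert_iff,
    Finset.coe_image, Finset.coe_univ, Set.image_univ, Set.mem_range]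
  constructor
  · rintro ⟨t, hst⟩
    obtain ⟨u, rfl⟩ := PresentedMonoid.surjective_mk (rels := dualI2Rel m) s
    obtain ⟨v, rfl⟩ := PresentedMonoid.surjective_mk (rels := dualI2Rel m) t
    have hlen2 := congrArg (lenN m) hst
    rw [lenN_mul, lenN_mk, lenN_mk, lenN_Δ] at hlen2
    rcases (by omega : u.length = 0 ∨ u.length = 1 ∨ u.length = 2) with h | h | h
    · right; left
      rw [(FreeMonoid.length_eq_zero).mp h]
      exact map_one _
    · obtain ⟨i, rfl⟩ := (FreeMonoid.length_eq_one).mp h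
      right; right; exact ⟨i, rfl⟩
    · left
      have hv : v = 1 := (FreeMonoid.length_eq_zero).mp (by omega)
      rw [hv, map_one, mul_one] at hst
      exact hst
  · rintro (rfl | rfl | ⟨i, rfl⟩)
    · exact ⟨1, mul_one _⟩
    · exact ⟨Δ m, one_mul _⟩
    · refine ⟨gen m (i - 1), ?_⟩
      have := prod_eq m (i - 1)
      rwa [sub_add_cancel] at this

lemma card_simples : (simples m).card = m + 2 := by
  classical
  rw [simples, Finset.card_insert_of_notMem, Finset.card_insert_of_notMem,
    Finset.card_image_of_injective _ (gen_injective m), Finset.card_univ, Fintype.card_fin]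
  · simp only [Finset.mem_image, Finset.mem_univ, true_and, not_exists]
    intro i h
    exact gen_ne_one m i h
  · simp only [Finset.mem_insert, Finset.mem_image, Finset.mem_univ, true_and, not_or, not_exists]
    exact ⟨Δ_ne_one m, fun i h => Δ_ne_gen m i h.symm⟩

end DualI2Aux

/-- The dual braid monoid `B*(I₂(m))` has exactly `m + 2` simple elements: the Garside
element `Δ = σ₂ σ₁` has exactly `m + 2` left divisors. -/
theorem dualI2_card_simples (m : ℕ) [NeZero m] (hm : 3 ≤ m) :
    Nat.card {s : PresentedMonoid (dualI2Rel m) //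
      ∃ t, s * t = PresentedMonoid.of (dualI2Rel m) 1 * PresentedMonoid.of (dualI2Rel m) 0} =
      m + 2 := by
  have h : Nat.card {s : PresentedMonoid (dualI2Rel m) | ∃ t, s * t = DualI2Aux.Δ m} = m + 2 := by
    rw [Nat.card_coe_set_eq, DualI2Aux.divisors_eq, Set.ncard_coe_finset,
      DualI2Aux.card_simples]
  exact h
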